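/- arXiv:2405.17499 — 3 statements merged into one kernel-verified Lean document; each statement's English description precedes it below -/
import Mathlib

section
/- The number of distinct subsequences (including the empty sequence) of the alternating binary word ACAC... of length t equals F(t+2) - 1, where F denotes Fibonacci numbers with F(1)=1, F(2)=2; equivalently it equals the partial sum F(0)+F(1)+...+F(t) with F(0)=1. -/
open List Finset

/-- The `q`-bonacci numbers: `F_q(0)=1`, `F_q(t)=2^(t-1)` for `1 ≤ t ≤ q`,
and `F_q(t)` is the sum of the previous `q` terms for `t > q`. -/
def qbonacci (q : ℕ) : ℕ → ℕ
  | 0 => 1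
  | t + 1 =>
    if t + 1 ≤ q then 2 ^ t
    else ∑ i ∈ Finset.range q, qbonacci q (t - i)
  decreasing_by exact Nat.lt_succ_of_le (Nat.sub_le t i)

/-- The length-`t` word cycling through the alphabet `{0, 1, ..., q-1}`. -/
def cyc (q t : ℕ) : List ℕ := (List.range t).map (· % q)

/-- The alternating binary word `0,1,0,1,...` of length `t` (A=0, C=1). -/
def alt (t : ℕ) : List ℕ := (List.range t).map (· % 2)

/-- `tau q x` is the least `s` such that `x` is a subsequence of `cyc q s`. -/
noncomputable def tau (q : ℕ) (x : List ℕ) : ℕ := sInf {s | x <+ cyc q s}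

lemma alt_succ (t : ℕ) : alt (t+1) = alt t ++ [t % 2] := by
  simp [alt, List.range_succ]

lemma sub_concat_eq {x w : List ℕ} {a : ℕ} : x ++ [a] <+ w ++ [a] ↔ x <+ w := by
  constructor
  · intro h
    rw [List.sublist_append_iff] at h
    obtain ⟨l1, l2, he, h1, h2⟩ := h
    rcases List.sublist_singleton.mp h2 with rfl | rfl
    · rw [List.append_nil] at he; subst he
      exact ((x.sublist_append_left [a]).trans h1)
    · have := List.append_inj_right' he rfl
      have hx : x = l1 := by
        have := (List.append_left_injective [a]) he
        exact this
      subst hx; exact h1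
  · intro h; exact h.append (List.Sublist.refl [a])

lemma sub_concat_ne {x w : List ℕ} {a b : ℕ} (hab : a ≠ b) :
    x ++ [a] <+ w ++ [b] ↔ x ++ [a] <+ w := by
  constructor
  · intro h
    rw [List.sublist_append_iff] at h
    obtain ⟨l1, l2, he, h1, h2⟩ := h
    rcases List.sublist_singleton.mp h2 with rfl | rfl
    · rw [List.append_nil] at he; subst he; exact h1
    · exfalso
      have : some a = some b := by
        rw [← (List.getLast?_concat : (x ++ [a]).getLast? = some a), ← (List.getLast?_concat : (l1 ++ [b]).getLast? = some b), he]
      exact hab (Option.some_injective _ this)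
  · intro h; exact h.trans (w.sublist_append_left [b])

lemma concat_sub_alt (s : ℕ) {x : List ℕ} :
    x ++ [s % 2] <+ alt (s+2) ↔ x <+ alt s := by
  rw [alt_succ, alt_succ, sub_concat_ne (by omega : s % 2 ≠ (s+1) % 2), sub_concat_eq]

noncomputable def D (t : ℕ) : ℕ := ((alt t).sublists.toFinset).card

lemma key (s : ℕ) : D (s+3) + D s = 2 * D (s+2) := by
  have ha : (s+2) % 2 = s % 2 := by omega
  have hF : (alt (s+3)).sublists.toFinset =
      (alt (s+2)).sublists.toFinset ∪
        ((alt (s+2)).sublists.toFinset).image (fun x => x ++ [s % 2]) := by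
    ext y
    simp only [List.mem_toFinset, Finset.mem_union, Finset.mem_image, alt_succ (s+2),
      List.sublists_concat, List.mem_append, List.mem_map, List.mem_sublists, ha,
      ← alt_succ]
  have hI : (alt (s+2)).sublists.toFinset ∩
      ((alt (s+2)).sublists.toFinset).image (fun x => x ++ [s % 2]) =
      ((alt s).sublists.toFinset).image (fun x => x ++ [s % 2]) := by
    ext y
    simp only [Finset.mem_inter, Finset.mem_image, List.mem_toFinset, List.mem_sublists]
    constructor
    · rintro ⟨hy, x, hx, rfl⟩
      exact ⟨x, (concat_sub_alt s).mp hy, rfl⟩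
    · rintro ⟨x, hx, rfl⟩
      have h2 := (concat_sub_alt s).mpr hx
      exact ⟨h2, x, (x.sublist_append_left [s % 2]).trans h2, rfl⟩
  have hinj : Function.Injective (fun x : List ℕ => x ++ [s % 2]) :=
    List.append_left_injective [s % 2]
  have := Finset.card_union_add_card_inter (alt (s+2)).sublists.toFinset
      (((alt (s+2)).sublists.toFinset).image (fun x => x ++ [s % 2]))
  rw [← hF, hI, Finset.card_image_of_injective _ hinj,
    Finset.card_image_of_injective _ hinj] at this
  unfold D
  omega

lemma D_eq : ∀ t, D t + 1 = Nat.fib (t+3) := by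
  intro t
  induction t using Nat.strong_induction_on with
  | _ t ih =>
    match t with
    | 0 => unfold D; decide
    | 1 => unfold D; decide
    | 2 => unfold D; decide
    | (s+3) =>
      have h1 := ih (s+2) (by omega)
      rw [show s+2+3 = s+5 from by ring] at h1
      have h2 := ih s (by omega)
      have hk := key s
      have f1 : Nat.fib (s+6) = Nat.fib (s+5) + Nat.fib (s+4) := by
        rw [show s+6 = (s+4)+2 by ring, Nat.fib_add_two]; ring
      have f2 : Nat.fib (s+5) = Nat.fib (s+4) + Nat.fib (s+3) := by
        rw [show s+5 = (s+3)+2 by ring, Nat.fib_add_two]; ring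
      have : s + 3 + 3 = s + 6 := by ring
      rw [this]
      omega

theorem stmt1 (t : ℕ) :
    {x : List ℕ | x <+ alt t}.ncard = Nat.fib (t + 3) - 1 := by
  have hset : {x : List ℕ | x <+ alt t} = ↑((alt t).sublists.toFinset) := by
    ext x; simp [List.mem_sublists]
  rw [hset, Set.ncard_coe_finset]
  have := D_eq t
  unfold D at this
  omega
end

section
/- For 1 <= t <= q, the number of nonempty words x over an alphabet of size q whose minimal synthesis time against the cyclic master lineup equals t (i.e., tau(x) = t) is exactly 2^{t-1}. -/
open List Finset

lemma cyc_eq_range {q s : ℕ} (h : s ≤ q) : cyc q s = List.range s := by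
  unfold cyc
  conv_rhs => rw [← List.map_id (List.range s)]
  apply List.map_congr_left
  intro a ha
  simp only [List.mem_range] at ha
  exact Nat.mod_eq_of_lt (lt_of_lt_of_le ha h)

lemma cyc_sublist {q s s' : ℕ} (h : s ≤ s') : cyc q s <+ cyc q s' :=
  (List.range_sublist.mpr h).map _

lemma tau_eq_iff {q t : ℕ} (x : List ℕ) (ht : 1 ≤ t) :
    tau q x = t ↔ x <+ cyc q t ∧ ¬ x <+ cyc q (t - 1) := by
  constructor
  · intro h
    have hne : {s | x <+ cyc q s}.Nonempty := by
      by_contra hc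
      rw [Set.not_nonempty_iff_eq_empty] at hc
      rw [tau, hc, Nat.sInf_empty] at h
      omega
    have hmem := Nat.sInf_mem hne
    rw [tau] at h
    refine ⟨h ▸ hmem, fun hc => ?_⟩
    have := Nat.sInf_le (s := {s | x <+ cyc q s}) hc
    omega
  · rintro ⟨h1, h2⟩
    have hle : tau q x ≤ t := Nat.sInf_le h1
    rcases lt_or_eq_of_le hle with hlt | he
    · exfalso
      rw [tau] at hlt
      have hmem := Nat.sInf_mem (⟨t, h1⟩ : {s | x <+ cyc q s}.Nonempty)
      exact h2 (hmem.trans (cyc_sublist (by omega)))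
    · exact he

theorem stmt3 (q t : ℕ) (ht1 : 1 ≤ t) (htq : t ≤ q) :
    {x : List ℕ | x ≠ [] ∧ tau q x = t}.ncard = 2 ^ (t - 1) := by
  obtain ⟨n, rfl⟩ : ∃ n, t = n + 1 := ⟨t - 1, by omega⟩
  have hset : {x : List ℕ | x ≠ [] ∧ tau q x = n + 1} =
      ↑(((List.range n).sublists.map (· ++ [n])).toFinset) := by
    ext x
    simp only [Set.mem_setOf_eq, Finset.coe_sort_coe, List.coe_toFinset, List.mem_map,
      List.mem_sublists, Set.mem_setOf_eq]
    rw [tau_eq_iff x (by omega), cyc_eq_range htq, cyc_eq_range (by omega),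
      Nat.add_sub_cancel, List.range_succ]
    constructor
    · rintro ⟨hne, hsub, hnot⟩
      rw [List.sublist_append_iff] at hsub
      obtain ⟨l₁, l₂, rfl, h₁, h₂⟩ := hsub
      rcases List.sublist_singleton.mp h₂ with rfl | rfl
      · exact absurd (by simpa using h₁) hnot
      · exact ⟨l₁, h₁, rfl⟩
    · rintro ⟨l, hl, rfl⟩
      refine ⟨by simp, hl.append (List.Sublist.refl _), fun hc => ?_⟩
      have : n ∈ List.range n := hc.subset (by simp)
      simp at this
  rw [hset, Set.ncard_coe_finset]
  have hnodup : (((List.range n).sublists.map (· ++ [n]))).Nodup := by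
    refine List.Nodup.map ?_ (List.nodup_sublists.mpr (List.nodup_range (n := n)))
    intro a b h
    simpa using h
  rw [List.toFinset_card_of_nodup hnodup, List.length_map, List.length_sublists,
    List.length_range, Nat.add_sub_cancel]
end

section
/- For any word M of length t over an alphabet Sigma of size q, the number of distinct subsequences of M (including the empty subsequence) is at most F_q(0) + F_q(1) + ... + F_q(t), with equality when M cycles through the alphabet; i.e., cyclic master lineups maximize the number of distinct subsequences. -/
open List Finset

-- sublists finset and count
def sF (M : List ℕ) : Finset (List ℕ) := M.sublists.toFinset

lemma mem_sF {x M : List ℕ} : x ∈ sF M ↔ x <+ M := by simp [sF]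

def g (M : List ℕ) : ℕ := (sF M).card

lemma g_nil : g [] = 1 := by simp [g, sF]

-- S
def S (q t : ℕ) : ℕ := ∑ i ∈ Finset.range (t + 1), qbonacci q i

lemma qbonacci_zero (q : ℕ) : qbonacci q 0 = 1 := by rw [qbonacci]

lemma qbonacci_succ (q t : ℕ) :
    qbonacci q (t + 1) = if t + 1 ≤ q then 2 ^ t
      else ∑ i ∈ Finset.range q, qbonacci q (t - i) := by rw [qbonacci]

lemma S_zero (q : ℕ) : S q 0 = 1 := by simp [S, qbonacci_zero]

lemma S_pow {q t : ℕ} (h : t ≤ q) : S q t = 2 ^ t := by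
  induction t with
  | zero => simp [S_zero]
  | succ n ih =>
    rw [S, Finset.sum_range_succ, ← S, ih (by omega), qbonacci_succ, if_pos h]
    ring

lemma S_mono (q : ℕ) : Monotone (S q) := by
  intro a b hab
  exact Finset.sum_le_sum_of_subset (Finset.range_subset_range.2 (by omega))

lemma S_rec_lt {q t : ℕ} (h : t < q) : S q (t + 1) = 2 * S q t := by
  rw [S_pow h.le, S_pow (by omega)]; ring

lemma S_rec_ge {q t : ℕ} (hq : 1 ≤ q) (h : q ≤ t) :
    S q (t + 1) + S q (t - q) = 2 * S q t := by
  have h1 : S q (t + 1) = S q t + qbonacci q (t + 1) := by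
    rw [S, Finset.sum_range_succ, ← S]
  have h2 : qbonacci q (t + 1) = ∑ i ∈ Finset.range q, qbonacci q (t - i) := by
    rw [qbonacci_succ, if_neg (by omega)]
  -- S q t = S q (t-q) + ∑_{i ∈ range q} qbonacci (t - i)
  have h3 : S q t = S q (t - q) + ∑ i ∈ Finset.range q, qbonacci q (t - i) := by
    have hs : (t - q + 1) + q = t + 1 := by omega
    rw [S, ← hs, Finset.sum_range_add, ← S]
    congr 1
    rw [← Finset.sum_range_reflect]
    apply Finset.sum_congr rfl
    intro i hi
    simp only [Finset.mem_range] at hi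
    congr 1
    omega
  omega

lemma S_id {q : ℕ} (hq : 1 ≤ q) : ∀ t, S q t = 1 + ∑ i ∈ Finset.Ico (t - q) t, S q i := by
  intro t
  induction t with
  | zero => simp [S_zero]
  | succ n ih =>
    rcases lt_or_ge n q with h | h
    · have e1 : n + 1 - q = 0 := by omega
      have e2 : n - q = 0 := by omega
      rw [e1] at *
      rw [e2] at ih
      have : ∑ i ∈ Finset.Ico 0 (n + 1), S q i = (∑ i ∈ Finset.Ico 0 n, S q i) + S q n := by
        rw [Finset.sum_Ico_succ_top (by omega)]
      rw [this, S_rec_lt h]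
      omega
    · have e1 : n + 1 - q = (n - q) + 1 := by omega
      have split1 : ∑ i ∈ Finset.Ico (n - q) n, S q i
          = S q (n - q) + ∑ i ∈ Finset.Ico (n - q + 1) n, S q i := by
        rw [Finset.sum_eq_sum_Ico_succ_bot (by omega : n - q < n)]
      have split2 : ∑ i ∈ Finset.Ico (n + 1 - q) (n + 1), S q i
          = (∑ i ∈ Finset.Ico (n - q + 1) n, S q i) + S q n := by
        rw [e1, Finset.sum_Ico_succ_top (by omega)]
      have hrec := S_rec_ge hq h
      rw [split2]
      rw [split1] at ih
      omega

-- shift lemma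
lemma shift_sum {f : ℕ → ℕ} (hf : Monotone f) (t q : ℕ) :
    ∑ i ∈ Finset.Ico (t - q) t, f i ≤ ∑ i ∈ Finset.Ico (t + 1 - q) (t + 1), f i := by
  have h1 : ∑ i ∈ Finset.Ico (t - q) t, f i ≤ ∑ i ∈ Finset.Ico (t - q) t, f (i + 1) :=
    Finset.sum_le_sum fun i _ => hf (by omega)
  have h2 : ∑ i ∈ Finset.Ico (t - q) t, f (i + 1)
      = ∑ i ∈ Finset.Ico (t - q + 1) (t + 1), f i := by
    rw [← Finset.map_add_right_Ico _ _ 1, Finset.sum_map]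
    rfl
  have h3 : Finset.Ico (t - q + 1) (t + 1) ⊆ Finset.Ico (t + 1 - q) (t + 1) := by
    apply Finset.Ico_subset_Ico (by omega) le_rfl
  calc ∑ i ∈ Finset.Ico (t - q) t, f i ≤ _ := h1
    _ = _ := h2
    _ ≤ _ := Finset.sum_le_sum_of_subset h3

lemma dominate {f : ℕ → ℕ} (hf : Monotone f) :
    ∀ t q (L : Finset ℕ), L ⊆ Finset.range t → L.card ≤ q →
      ∑ ℓ ∈ L, f ℓ ≤ ∑ i ∈ Finset.Ico (t - q) t, f i := by
  intro t
  induction t with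
  | zero =>
    intro q L hL _
    have : L = ∅ := Finset.subset_empty.1 (by simpa using hL)
    simp [this]
  | succ n ih =>
    intro q L hL hcard
    rcases Nat.eq_zero_or_pos q with rfl | hq
    · have : L = ∅ := Finset.card_eq_zero.1 (by omega)
      simp [this]
    by_cases hn : n ∈ L
    · have hL' : L.erase n ⊆ Finset.range n := by
        intro x hx
        have hx1 := Finset.mem_of_mem_erase hx
        have hx2 := Finset.ne_of_mem_erase hx
        have := hL hx1
        simp only [Finset.mem_range] at this ⊢
        omega
      have hcard' : (L.erase n).card ≤ q - 1 := by
        rw [Finset.card_erase_of_mem hn]; omega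
      have h1 := ih (q - 1) (L.erase n) hL' hcard'
      have e1 : n - (q - 1) = n + 1 - q := by omega
      have split : ∑ i ∈ Finset.Ico (n + 1 - q) (n + 1), f i
          = (∑ i ∈ Finset.Ico (n + 1 - q) n, f i) + f n :=
        Finset.sum_Ico_succ_top (by omega) f
      have split2 : ∑ ℓ ∈ L, f ℓ = (∑ ℓ ∈ L.erase n, f ℓ) + f n :=
        (Finset.sum_erase_add _ _ hn).symm
      rw [split, split2, ← e1]
      omega
    · have hL' : L ⊆ Finset.range n := by
        intro x hx
        have := hL hx
        simp only [Finset.mem_range] at this ⊢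
        rcases Nat.lt_succ_iff_lt_or_eq.1 this with h | rfl
        · exact h
        · exact absurd hx hn
      calc ∑ ℓ ∈ L, f ℓ ≤ ∑ i ∈ Finset.Ico (n - q) n, f i := ih q L hL' hcard
        _ ≤ _ := shift_sum hf n q

-- list splitting lemmas
lemma cons_sublist_split {b : ℕ} {L R y : List ℕ} (hb : b ∉ L) :
    b :: y <+ L ++ b :: R ↔ y <+ R := by
  constructor
  · intro h
    induction L with
    | nil => exact (List.cons_sublist_cons).1 h
    | cons c L ih =>
      simp only [List.cons_append] at h
      cases h with
      | cons _ h' => exact ih (by simp at hb; tauto) h'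
      | cons_cons => simp at hb
  · intro h
    calc b :: y <+ b :: R := List.cons_sublist_cons.2 h
      _ <+ L ++ b :: R := List.sublist_append_right _ _

lemma indexOf_split {b : ℕ} {N : List ℕ} (h : b ∈ N) :
    b ∉ N.take (List.idxOf b N) ∧
      N = N.take (List.idxOf b N) ++ b :: N.drop (List.idxOf b N + 1) := by
  induction N with
  | nil => simp at h
  | cons c N ih =>
    by_cases hbc : b = c
    · subst hbc
      simp [List.idxOf_cons_self]
    · have hb : b ∈ N := by simp at h; tauto
      obtain ⟨h1, h2⟩ := ih hb
      have hidx : List.idxOf b (c :: N) = List.idxOf b N + 1 := by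
        rw [List.idxOf_cons_ne _ (by exact fun hh => hbc hh.symm)]
      constructor
      · rw [hidx, List.take_succ_cons]
        simp only [List.mem_cons]
        tauto
      · rw [hidx, List.take_succ_cons, List.drop_succ_cons, List.cons_append, ← h2]

def rest (N : List ℕ) (b : ℕ) : List ℕ := N.drop (List.idxOf b N + 1)

lemma cons_sublist_rest {b : ℕ} {y N : List ℕ} (hb : b ∈ N) :
    b :: y <+ N ↔ y <+ rest N b := by
  obtain ⟨h1, h2⟩ := indexOf_split hb
  constructor
  · intro h
    rw [h2] at h
    exact (cons_sublist_split h1).1 h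
  · intro h
    conv_rhs => rw [h2]
    exact (cons_sublist_split h1).2 h

lemma sF_decomp (N : List ℕ) :
    sF N = insert []
      (N.toFinset.biUnion fun b => (sF (rest N b)).image (b :: ·)) := by
  ext x
  simp only [mem_sF, Finset.mem_insert, Finset.mem_biUnion, Finset.mem_image,
    List.mem_toFinset]
  constructor
  · intro hx
    cases x with
    | nil => exact Or.inl rfl
    | cons c y =>
      have hc : c ∈ N := hx.mem (List.mem_cons_self)
      exact Or.inr ⟨c, hc, y, (cons_sublist_rest hc).1 hx, rfl⟩
  · rintro (rfl | ⟨b, hb, y, hy, rfl⟩)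
    · exact List.nil_sublist N
    · exact (cons_sublist_rest hb).2 hy

lemma g_decomp (N : List ℕ) :
    g N = 1 + ∑ b ∈ N.toFinset, g (rest N b) := by
  have hnm : ([] : List ℕ) ∉ N.toFinset.biUnion fun b => (sF (rest N b)).image (b :: ·) := by
    intro h
    simp only [Finset.mem_biUnion, Finset.mem_image] at h
    obtain ⟨b, _, y, _, hy⟩ := h
    exact List.cons_ne_nil _ _ hy
  have hdisj : ∀ x ∈ N.toFinset, ∀ y ∈ N.toFinset, x ≠ y →
      Disjoint ((sF (rest N x)).image (x :: ·)) ((sF (rest N y)).image (y :: ·)) := by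
    intro x _ y _ hxy
    simp only [Finset.disjoint_left, Finset.mem_image]
    rintro z ⟨u, _, rfl⟩ ⟨v, _, hv⟩
    exact hxy (List.head_eq_of_cons_eq hv.symm ▸ rfl)
  rw [g, sF_decomp, Finset.card_insert_of_notMem hnm, Finset.card_biUnion hdisj, add_comm]
  congr 1
  apply Finset.sum_congr rfl
  intro b _
  exact Finset.card_image_of_injective _ List.cons_injective

lemma g_le {q : ℕ} (hq : 1 ≤ q) :
    ∀ n (N : List ℕ), N.length = n → (∀ a ∈ N, a < q) → g N ≤ S q n := by
  intro n
  induction n using Nat.strong_induction_on with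
  | _ n ih =>
    intro N hlen hN
    rw [g_decomp]
    have key : ∀ b ∈ N.toFinset, g (rest N b) ≤ S q (n - (List.idxOf b N + 1)) := by
      intro b hb
      have hbN : b ∈ N := List.mem_toFinset.1 hb
      have hidx : List.idxOf b N < n := hlen ▸ List.idxOf_lt_length_iff.2 hbN
      have hlen' : (rest N b).length = n - (List.idxOf b N + 1) := by
        rw [rest, List.length_drop, hlen]
      exact ih _ (by omega) _ hlen' (fun a ha => hN a ((List.drop_sublist _ _).mem ha))
    have step1 : ∑ b ∈ N.toFinset, g (rest N b)
        ≤ ∑ b ∈ N.toFinset, S q (n - (List.idxOf b N + 1)) :=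
      Finset.sum_le_sum key
    have hinj : Set.InjOn (fun b => n - (List.idxOf b N + 1)) N.toFinset := by
      intro a ha b hb hab
      have haN : a ∈ N := by simpa using ha
      have hbN : b ∈ N := by simpa using hb
      have h1 : List.idxOf a N < N.length := List.idxOf_lt_length_iff.2 haN
      have h2 : List.idxOf b N < N.length := List.idxOf_lt_length_iff.2 hbN
      have heq : List.idxOf a N = List.idxOf b N := by
        simp only at hab
        rw [hlen] at h1 h2
        omega
      calc a = N[List.idxOf a N] := (List.getElem_idxOf h1).symm
        _ = N[List.idxOf b N] := by congr 1
        _ = b := List.getElem_idxOf h2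
    have step2 : ∑ b ∈ N.toFinset, S q (n - (List.idxOf b N + 1))
        = ∑ m ∈ N.toFinset.image (fun b => n - (List.idxOf b N + 1)), S q m :=
      (Finset.sum_image fun a ha b hb h => hinj ha hb h).symm
    have himg_sub : N.toFinset.image (fun b => n - (List.idxOf b N + 1))
        ⊆ Finset.range n := by
      intro m hm
      simp only [Finset.mem_image] at hm
      obtain ⟨b, hb, rfl⟩ := hm
      have hbN : b ∈ N := List.mem_toFinset.1 hb
      have : 0 < n := by
        rw [← hlen]
        exact List.length_pos_iff.2 (List.ne_nil_of_mem hbN)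
      simp only [Finset.mem_range]
      omega
    have hcard : (N.toFinset.image (fun b => n - (List.idxOf b N + 1))).card ≤ q := by
      calc _ ≤ N.toFinset.card := Finset.card_image_le
        _ ≤ (Finset.range q).card := Finset.card_le_card (fun a ha => by
            simp only [Finset.mem_range]
            exact hN a (List.mem_toFinset.1 ha))
        _ = q := Finset.card_range q
    have step3 := dominate (S_mono q) n q _ himg_sub hcard
    have hid := S_id hq n
    omega

-- reversed cyclic word
def rcyc (q : ℕ) : ℕ → List ℕ
  | 0 => []
  | t + 1 => (t % q) :: rcyc q t

lemma cyc_succ (q t : ℕ) : cyc q (t + 1) = cyc q t ++ [t % q] := by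
  simp [cyc, List.range_succ]

lemma rcyc_eq_reverse (q t : ℕ) : rcyc q t = (cyc q t).reverse := by
  induction t with
  | zero => simp [cyc, rcyc]
  | succ n ih => rw [cyc_succ, List.reverse_append, rcyc, ih]; rfl

lemma rcyc_map (q t : ℕ) : rcyc q t = (List.range t).map (fun j => (t - 1 - j) % q) := by
  induction t with
  | zero => rfl
  | succ n ih =>
    rw [rcyc, ih, List.range_succ_eq_map, List.map_cons, List.map_map]
    congr 1
    apply List.map_congr_left
    intro a ha
    simp only [Function.comp_apply, List.mem_range] at *
    congr 1
    omega

-- cons recurrences for g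
lemma g_cons_split {b : ℕ} {N L R : List ℕ} (hN : N = L ++ b :: R) (hb : b ∉ L) :
    g (b :: N) + g R = 2 * g N := by
  classical
  have hU : sF (b :: N) = sF N ∪ (sF N).image (b :: ·) := by
    ext x
    simp only [mem_sF, Finset.mem_union, Finset.mem_image]
    rw [List.sublist_cons_iff]
    constructor
    · rintro (h | ⟨r, rfl, hr⟩)
      · exact Or.inl h
      · exact Or.inr ⟨r, hr, rfl⟩
    · rintro (h | ⟨r, hr, rfl⟩)
      · exact Or.inl h
      · exact Or.inr ⟨r, rfl, hr⟩
  have hI : sF N ∩ (sF N).image (b :: ·) = (sF R).image (b :: ·) := by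
    ext x
    simp only [Finset.mem_inter, Finset.mem_image, mem_sF]
    constructor
    · rintro ⟨hx, y, hy, rfl⟩
      refine ⟨y, ?_, rfl⟩
      rw [hN] at hx
      exact (cons_sublist_split hb).1 hx
    · rintro ⟨y, hy, rfl⟩
      have h1 : b :: y <+ N := by rw [hN]; exact (cons_sublist_split hb).2 hy
      exact ⟨h1, y, List.sublist_of_cons_sublist h1, rfl⟩
  have hcard := Finset.card_union_add_card_inter (sF N) ((sF N).image (b :: ·))
  rw [← hU, hI, Finset.card_image_of_injective _ List.cons_injective,
    Finset.card_image_of_injective _ List.cons_injective] at hcard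
  show (sF (b :: N)).card + (sF R).card = 2 * (sF N).card
  omega

lemma g_cons_notmem {b : ℕ} {N : List ℕ} (hb : b ∉ N) : g (b :: N) = 2 * g N := by
  classical
  have hU : sF (b :: N) = sF N ∪ (sF N).image (b :: ·) := by
    ext x
    simp only [mem_sF, Finset.mem_union, Finset.mem_image]
    rw [List.sublist_cons_iff]
    constructor
    · rintro (h | ⟨r, rfl, hr⟩)
      · exact Or.inl h
      · exact Or.inr ⟨r, hr, rfl⟩
    · rintro (h | ⟨r, hr, rfl⟩)
      · exact Or.inl h
      · exact Or.inr ⟨r, rfl, hr⟩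
  have hdisj : Disjoint (sF N) ((sF N).image (b :: ·)) := by
    simp only [Finset.disjoint_left, Finset.mem_image, mem_sF]
    rintro x hx ⟨y, hy, rfl⟩
    exact hb (hx.mem (List.mem_cons_self))
  show (sF (b :: N)).card = 2 * (sF N).card
  rw [hU, Finset.card_union_of_disjoint hdisj,
    Finset.card_image_of_injective _ List.cons_injective]
  omega

lemma rcyc_split {q t : ℕ} (hq : 1 ≤ q) (h : q ≤ t) :
    ∃ L, rcyc q t = L ++ (t % q) :: rcyc q (t - q) ∧ (t % q) ∉ L := by
  refine ⟨(List.range (q - 1)).map (fun j => (t - 1 - j) % q), ?_, ?_⟩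
  · have h2 : List.range q = List.range (q - 1) ++ [q - 1] := by
      conv_lhs => rw [show q = (q - 1) + 1 by omega]
      rw [List.range_succ]
    have hr : List.range t
        = List.range (q - 1) ++ [q - 1] ++ List.map (fun x => q + x) (List.range (t - q)) := by
      calc List.range t = List.range (q + (t - q)) := by rw [show q + (t - q) = t by omega]
        _ = List.range q ++ List.map (fun x => q + x) (List.range (t - q)) := List.range_add
        _ = _ := by rw [h2]
    rw [rcyc_map, hr, List.map_append, List.map_append, List.append_assoc]
    congr 1
    simp only [List.map_cons, List.map_nil, List.map_map, List.singleton_append,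
      List.cons_append, List.nil_append]
    congr 1
    · have h1 : t - 1 - (q - 1) = t - q := by omega
      rw [h1]
      conv_rhs => rw [show t = (t - q) + q by omega]
      rw [Nat.add_mod_right]
    · rw [rcyc_map]
      apply List.map_congr_left
      intro a ha
      simp only [List.mem_range, Function.comp_apply] at *
      congr 1
      omega
  · intro hmem
    simp only [List.mem_map, List.mem_range] at hmem
    obtain ⟨j, hj, hjeq⟩ := hmem
    have h1 : t - 1 - j = t - (j + 1) := by omega
    rw [h1] at hjeq
    have h2 : t - (j + 1) ≤ t := by omega
    have h4 : t - (j + 1) ≡ t [MOD q] := hjeq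
    have h5 : q ∣ t - (t - (j + 1)) := (Nat.modEq_iff_dvd' h2).1 h4
    have h6 : t - (t - (j + 1)) = j + 1 := by omega
    rw [h6] at h5
    have := Nat.le_of_dvd (by omega) h5
    omega

lemma g_rcyc {q : ℕ} (hq : 1 ≤ q) : ∀ t, g (rcyc q t) = S q t := by
  intro t
  induction t using Nat.strong_induction_on with
  | _ t ih =>
    match t with
    | 0 => rw [S_zero]; exact g_nil
    | n + 1 =>
      show g ((n % q) :: rcyc q n) = S q (n + 1)
      rcases lt_or_ge n q with h | h
      · -- n % q = n and n ∉ rcyc q n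
        have hmod : n % q = n := Nat.mod_eq_of_lt h
        have hnm : n ∉ rcyc q n := by
          rw [rcyc_map]
          intro hmem
          simp only [List.mem_map, List.mem_range] at hmem
          obtain ⟨j, hj, hjeq⟩ := hmem
          have := Nat.mod_le (n - 1 - j) q
          omega
        rw [hmod, g_cons_notmem hnm, ih n (by omega), S_rec_lt h]
      · obtain ⟨L, hL, hbL⟩ := rcyc_split hq h
        have := g_cons_split hL hbL
        rw [ih n (by omega), ih (n - q) (by omega)] at this
        have hrec := S_rec_ge hq h
        omega

lemma g_reverse (M : List ℕ) : g M.reverse = g M := by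
  have himg : sF M.reverse = (sF M).image List.reverse := by
    ext x
    simp only [mem_sF, Finset.mem_image]
    constructor
    · intro h
      exact ⟨x.reverse, by simpa using h.reverse, List.reverse_reverse x⟩
    · rintro ⟨y, hy, rfl⟩
      simpa using hy.reverse
  rw [g, himg, Finset.card_image_of_injective _ List.reverse_injective]
  rfl


theorem stmt5 (q t : ℕ) (hq : 1 ≤ q) :
    (∀ M : List ℕ, (∀ a ∈ M, a < q) → M.length = t →
        {x : List ℕ | x <+ M}.ncard ≤ ∑ i ∈ Finset.range (t + 1), qbonacci q i) ∧
    {x : List ℕ | x <+ cyc q t}.ncard = ∑ i ∈ Finset.range (t + 1), qbonacci q i := by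
  constructor
  · intro M hM hlen
    have hset : {x : List ℕ | x <+ M} = ↑(sF M) := by
      ext x; simp [mem_sF]
    rw [hset, Set.ncard_coe_finset]
    exact g_le hq t M hlen hM
  · have hset : {x : List ℕ | x <+ cyc q t} = ↑(sF (cyc q t)) := by
      ext x; simp [mem_sF]
    rw [hset, Set.ncard_coe_finset]
    have hg : g (cyc q t) = S q t := by
      rw [← g_reverse, ← rcyc_eq_reverse]
      exact g_rcyc hq t
    exact hg
end
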